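/- arXiv:1906.00890 — 6 statements merged into one kernel-verified Lean document; each statement's English description precedes it below -/
import Mathlib

section
/- Let V, V' be finite sets of integers, let x, xᵉ : V → ℝ and x', xᵉ' : V' → ℝ, and let γ, B, H ≥ 0. Assume: (i) sqrt( Σ_{v ∈ V ∩ V'} (x'_v − xᵉ_v)² ) ≤ γ · d(x, xᵉ) (contraction of the remaining agents); (ii) d(xᵉ', xᵉ) ≤ sqrt(|V'|) · B (bounded variation of the points of interest); (iii) sqrt( Σ_{v ∈ V' \ V} (x'_v − xᵉ'_v)² ) ≤ sqrt(|V'|) · H (bounded join process). Then d(x', xᵉ') ≤ γ · d(x, xᵉ) + sqrt(|V'|) · (B + H). -/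
open Finset

/-- The open distance between two vectors `x : V₁ → ℝ` and `y : V₂ → ℝ`
(encoded as functions `ℤ → ℝ` together with their index sets `V₁, V₂`). -/
noncomputable def openDist (V₁ V₂ : Finset ℤ) (x y : ℤ → ℝ) : ℝ :=
  Real.sqrt ((∑ v ∈ V₁ ∩ V₂, (x v - y v) ^ 2) +
    (∑ v ∈ V₁ \ V₂, (x v) ^ 2) + (∑ v ∈ V₂ \ V₁, (y v) ^ 2))

/-- Minkowski inequality over a finite set. -/
lemma sqrt_sum_sq_add_le (s : Finset ℤ) (f g : ℤ → ℝ) :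
    Real.sqrt (∑ v ∈ s, (f v + g v) ^ 2) ≤
      Real.sqrt (∑ v ∈ s, (f v) ^ 2) + Real.sqrt (∑ v ∈ s, (g v) ^ 2) := by
  let F : EuclideanSpace ℝ s := WithLp.toLp 2 (fun v => f v)
  let G : EuclideanSpace ℝ s := WithLp.toLp 2 (fun v => g v)
  have h := norm_add_le F G
  have hn : ∀ (h : ℤ → ℝ) (H : EuclideanSpace ℝ s), (∀ v : s, H v = h v) →
      ‖H‖ = Real.sqrt (∑ v ∈ s, (h v) ^ 2) := by
    intro h H hH
    rw [EuclideanSpace.norm_eq]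
    congr 1
    rw [← Finset.sum_attach s fun v => (h v) ^ 2]
    exact Finset.sum_congr rfl fun v _ => by rw [hH v, Real.norm_eq_abs, sq_abs]
  rw [hn f F (fun v => rfl), hn g G (fun v => rfl)] at h
  rw [hn (fun v => f v + g v) (F + G) (fun v => rfl)] at h
  exact h

lemma sqrt_add_le' {a b : ℝ} (ha : 0 ≤ a) (hb : 0 ≤ b) :
    Real.sqrt (a + b) ≤ Real.sqrt a + Real.sqrt b := by
  rw [show a + b = (Real.sqrt a) ^ 2 + (Real.sqrt b) ^ 2 by
    rw [Real.sq_sqrt ha, Real.sq_sqrt hb]]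
  have h : (Real.sqrt a) ^ 2 + (Real.sqrt b) ^ 2 ≤ (Real.sqrt a + Real.sqrt b) ^ 2 := by
    have := mul_nonneg (Real.sqrt_nonneg a) (Real.sqrt_nonneg b)
    nlinarith
  calc Real.sqrt ((Real.sqrt a) ^ 2 + (Real.sqrt b) ^ 2)
      ≤ Real.sqrt ((Real.sqrt a + Real.sqrt b) ^ 2) := Real.sqrt_le_sqrt h
    _ = Real.sqrt a + Real.sqrt b := Real.sqrt_sq (by positivity)

/-- One-step estimate: contraction on remaining agents, bounded variation of the
points of interest and bounded join process imply a bound on the next distance. -/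
theorem openDist_one_step_bound (V V' : Finset ℤ)
    (x xe x' xe' : ℤ → ℝ) (γ B H : ℝ)
    (hγ : 0 ≤ γ) (hB : 0 ≤ B) (hH : 0 ≤ H)
    (hcontr : Real.sqrt (∑ v ∈ V ∩ V', (x' v - xe v) ^ 2) ≤ γ * openDist V V x xe)
    (hvar : openDist V' V xe' xe ≤ Real.sqrt ((V' : Finset ℤ).card) * B)
    (hjoin : Real.sqrt (∑ v ∈ V' \ V, (x' v - xe' v) ^ 2) ≤
      Real.sqrt ((V' : Finset ℤ).card) * H) :
    openDist V' V' x' xe' ≤ γ * openDist V V x xe +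
      Real.sqrt ((V' : Finset ℤ).card) * (B + H) := by
  have hsplit : (∑ v ∈ V' ∩ V, (x' v - xe' v) ^ 2) + (∑ v ∈ V' \ V, (x' v - xe' v) ^ 2)
      = ∑ v ∈ V', (x' v - xe' v) ^ 2 := Finset.sum_inter_add_sum_sdiff V' V _
  have h0 : openDist V' V' x' xe' = Real.sqrt (∑ v ∈ V', (x' v - xe' v) ^ 2) := by
    simp [openDist]
  have hA : Real.sqrt ((∑ v ∈ V' ∩ V, (x' v - xe' v) ^ 2) +
      (∑ v ∈ V' \ V, (x' v - xe' v) ^ 2)) ≤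
      Real.sqrt (∑ v ∈ V' ∩ V, (x' v - xe' v) ^ 2) +
      Real.sqrt (∑ v ∈ V' \ V, (x' v - xe' v) ^ 2) :=
    sqrt_add_le' (Finset.sum_nonneg fun v _ => sq_nonneg _)
      (Finset.sum_nonneg fun v _ => sq_nonneg _)
  -- bound on the intersection part
  have hmink : Real.sqrt (∑ v ∈ V' ∩ V, (x' v - xe' v) ^ 2) ≤
      Real.sqrt (∑ v ∈ V' ∩ V, (x' v - xe v) ^ 2) +
      Real.sqrt (∑ v ∈ V' ∩ V, (xe v - xe' v) ^ 2) := by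
    have := sqrt_sum_sq_add_le (V' ∩ V) (fun v => x' v - xe v) (fun v => xe v - xe' v)
    simpa using this
  have h1 : Real.sqrt (∑ v ∈ V' ∩ V, (x' v - xe v) ^ 2) ≤ γ * openDist V V x xe := by
    rwa [Finset.inter_comm]
  have h2 : Real.sqrt (∑ v ∈ V' ∩ V, (xe v - xe' v) ^ 2) ≤
      Real.sqrt ((V' : Finset ℤ).card) * B := by
    refine le_trans ?_ hvar
    unfold openDist
    apply Real.sqrt_le_sqrt
    have : (∑ v ∈ V' ∩ V, (xe v - xe' v) ^ 2) = ∑ v ∈ V' ∩ V, (xe' v - xe v) ^ 2 := by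
      apply Finset.sum_congr rfl; intro v _; ring
    rw [this]
    have hn1 : 0 ≤ ∑ v ∈ V' \ V, (xe' v) ^ 2 := Finset.sum_nonneg fun v _ => sq_nonneg _
    have hn2 : 0 ≤ ∑ v ∈ V \ V', (xe v) ^ 2 := Finset.sum_nonneg fun v _ => sq_nonneg _
    linarith
  calc openDist V' V' x' xe'
      = Real.sqrt ((∑ v ∈ V' ∩ V, (x' v - xe' v) ^ 2) +
        (∑ v ∈ V' \ V, (x' v - xe' v) ^ 2)) := by rw [h0, hsplit]
    _ ≤ Real.sqrt (∑ v ∈ V' ∩ V, (x' v - xe' v) ^ 2) +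
        Real.sqrt (∑ v ∈ V' \ V, (x' v - xe' v) ^ 2) := hA
    _ ≤ (Real.sqrt (∑ v ∈ V' ∩ V, (x' v - xe v) ^ 2) +
        Real.sqrt (∑ v ∈ V' ∩ V, (xe v - xe' v) ^ 2)) +
        Real.sqrt ((V' : Finset ℤ).card) * H := add_le_add hmink hjoin
    _ ≤ (γ * openDist V V x xe + Real.sqrt ((V' : Finset ℤ).card) * B) +
        Real.sqrt ((V' : Finset ℤ).card) * H := by
          exact add_le_add (add_le_add h1 h2) le_rfl
    _ = γ * openDist V V x xe + Real.sqrt ((V' : Finset ℤ).card) * (B + H) := by ring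
end

section
/- Let {V_k}_{k≥0} be a sequence of nonempty finite sets of integers, and for each k let x_k, xᵉ_k : V_k → ℝ. Let γ ∈ [0,1), B, H ≥ 0 and β > γ, and assume for every k ≥ 0: (i) sqrt( Σ_{v ∈ V_k ∩ V_{k+1}} (x_{k+1,v} − xᵉ_{k,v})² ) ≤ γ · d(x_k, xᵉ_k); (ii) d(xᵉ_{k+1}, xᵉ_k) ≤ sqrt(|V_{k+1}|) · B; (iii) sqrt( Σ_{v ∈ V_{k+1} \ V_k} (x_{k+1,v} − xᵉ_{k+1,v})² ) ≤ sqrt(|V_{k+1}|) · H; (iv) |V_{k+1}| ≥ β² · |V_k|. Then for every k ≥ 0, d(x_k, xᵉ_k)/sqrt(|V_k|) ≤ (γ/β)^k · d(x_0, xᵉ_0)/sqrt(|V_0|) + (B + H)/(1 − γ/β). -/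
open Finset

lemma my_sqrt_add_le (a b : ℝ) (ha : 0 ≤ a) (hb : 0 ≤ b) :
    Real.sqrt (a + b) ≤ Real.sqrt a + Real.sqrt b := by
  have h : a + b ≤ (Real.sqrt a + Real.sqrt b) ^ 2 := by
    have := Real.sq_sqrt ha
    have := Real.sq_sqrt hb
    nlinarith [Real.sqrt_nonneg a, Real.sqrt_nonneg b]
  calc Real.sqrt (a + b) ≤ Real.sqrt ((Real.sqrt a + Real.sqrt b) ^ 2) := Real.sqrt_le_sqrt h
    _ = Real.sqrt a + Real.sqrt b := Real.sqrt_sq (by positivity)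

lemma my_l2_triangle (s : Finset ℤ) (f g : ℤ → ℝ) :
    Real.sqrt (∑ v ∈ s, (f v + g v) ^ 2) ≤
      Real.sqrt (∑ v ∈ s, f v ^ 2) + Real.sqrt (∑ v ∈ s, g v ^ 2) := by
  have hf : (0:ℝ) ≤ ∑ v ∈ s, f v ^ 2 := Finset.sum_nonneg fun _ _ => sq_nonneg _
  have hg : (0:ℝ) ≤ ∑ v ∈ s, g v ^ 2 := Finset.sum_nonneg fun _ _ => sq_nonneg _
  have hcs : ∑ v ∈ s, f v * g v ≤
      Real.sqrt (∑ v ∈ s, f v ^ 2) * Real.sqrt (∑ v ∈ s, g v ^ 2) := by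
    have h1 := Finset.sum_mul_sq_le_sq_mul_sq s f g
    calc ∑ v ∈ s, f v * g v ≤ |∑ v ∈ s, f v * g v| := le_abs_self _
      _ = Real.sqrt ((∑ v ∈ s, f v * g v) ^ 2) := (Real.sqrt_sq_eq_abs _).symm
      _ ≤ Real.sqrt ((∑ v ∈ s, f v ^ 2) * ∑ v ∈ s, g v ^ 2) := Real.sqrt_le_sqrt h1
      _ = _ := Real.sqrt_mul hf _
  have h : ∑ v ∈ s, (f v + g v) ^ 2 ≤
      (Real.sqrt (∑ v ∈ s, f v ^ 2) + Real.sqrt (∑ v ∈ s, g v ^ 2)) ^ 2 := by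
    have e : ∑ v ∈ s, (f v + g v) ^ 2 =
        (∑ v ∈ s, f v ^ 2) + 2 * (∑ v ∈ s, f v * g v) + ∑ v ∈ s, g v ^ 2 := by
      simp only [add_sq]
      rw [Finset.sum_add_distrib, Finset.sum_add_distrib]
      simp_rw [mul_assoc]
      rw [← Finset.mul_sum]
    have := Real.sq_sqrt hf
    have := Real.sq_sqrt hg
    nlinarith
  calc Real.sqrt (∑ v ∈ s, (f v + g v) ^ 2)
      ≤ Real.sqrt ((Real.sqrt (∑ v ∈ s, f v ^ 2) + Real.sqrt (∑ v ∈ s, g v ^ 2)) ^ 2) :=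
        Real.sqrt_le_sqrt h
    _ = _ := Real.sqrt_sq (by positivity)

/-- Explicit iterate bound on the normalized distance between the state of a
contractive open multi-agent system and its trajectory of points of interest. -/
theorem openMAS_normalized_distance_bound (V : ℕ → Finset ℤ)
    (hV : ∀ k, (V k).Nonempty) (x xe : ℕ → ℤ → ℝ)
    (γ B H β : ℝ) (hγ0 : 0 ≤ γ) (hγ1 : γ < 1) (hB : 0 ≤ B) (hH : 0 ≤ H)
    (hβ : β > γ)
    (hcontr : ∀ k, Real.sqrt (∑ v ∈ V k ∩ V (k + 1), (x (k + 1) v - xe k v) ^ 2) ≤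
      γ * openDist (V k) (V k) (x k) (xe k))
    (hvar : ∀ k, openDist (V (k + 1)) (V k) (xe (k + 1)) (xe k) ≤
      Real.sqrt ((V (k + 1)).card) * B)
    (hjoin : ∀ k, Real.sqrt (∑ v ∈ V (k + 1) \ V k, (x (k + 1) v - xe (k + 1) v) ^ 2) ≤
      Real.sqrt ((V (k + 1)).card) * H)
    (hcard : ∀ k, ((V (k + 1)).card : ℝ) ≥ β ^ 2 * ((V k).card : ℝ)) :
    ∀ k, openDist (V k) (V k) (x k) (xe k) / Real.sqrt ((V k).card) ≤
      (γ / β) ^ k * (openDist (V 0) (V 0) (x 0) (xe 0) / Real.sqrt ((V 0).card)) +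
        (B + H) / (1 - γ / β) := by
  have hβ0 : 0 < β := lt_of_le_of_lt hγ0 hβ
  set q : ℝ := γ / β with hq
  have hq0 : 0 ≤ q := div_nonneg hγ0 hβ0.le
  have hq1 : q < 1 := (div_lt_one hβ0).mpr hβ
  set d : ℕ → ℝ := fun k => openDist (V k) (V k) (x k) (xe k) with hd
  have hdval : ∀ k, d k = Real.sqrt (∑ v ∈ V k, (x k v - xe k v) ^ 2) := by
    intro k
    simp [hd, openDist, Finset.inter_self, Finset.sdiff_self]
  have hdnn : ∀ k, 0 ≤ d k := fun k => by rw [hdval]; exact Real.sqrt_nonneg _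
  have hcpos : ∀ k, (0:ℝ) < Real.sqrt ((V k).card) := by
    intro k
    have : 0 < (V k).card := Finset.card_pos.mpr (hV k)
    exact Real.sqrt_pos.mpr (by exact_mod_cast this)
  -- key recurrence: d (k+1) ≤ γ * d k + sqrt(card (k+1)) * (B + H)
  have key : ∀ k, d (k + 1) ≤ γ * d k + Real.sqrt ((V (k + 1)).card) * (B + H) := by
    intro k
    have hsplit : ∑ v ∈ V (k + 1), (x (k + 1) v - xe (k + 1) v) ^ 2 =
        (∑ v ∈ V (k + 1) ∩ V k, (x (k + 1) v - xe (k + 1) v) ^ 2) +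
        ∑ v ∈ V (k + 1) \ V k, (x (k + 1) v - xe (k + 1) v) ^ 2 :=
      (Finset.sum_inter_add_sum_sdiff _ _ _).symm
    have h1 : d (k + 1) ≤
        Real.sqrt (∑ v ∈ V (k + 1) ∩ V k, (x (k + 1) v - xe (k + 1) v) ^ 2) +
        Real.sqrt (∑ v ∈ V (k + 1) \ V k, (x (k + 1) v - xe (k + 1) v) ^ 2) := by
      rw [hdval, hsplit]
      exact my_sqrt_add_le _ _ (Finset.sum_nonneg fun _ _ => sq_nonneg _)
        (Finset.sum_nonneg fun _ _ => sq_nonneg _)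
    -- triangle on the intersection
    have h2 : Real.sqrt (∑ v ∈ V (k + 1) ∩ V k, (x (k + 1) v - xe (k + 1) v) ^ 2) ≤
        Real.sqrt (∑ v ∈ V (k + 1) ∩ V k, (x (k + 1) v - xe k v) ^ 2) +
        Real.sqrt (∑ v ∈ V (k + 1) ∩ V k, (xe k v - xe (k + 1) v) ^ 2) := by
      have := my_l2_triangle (V (k + 1) ∩ V k)
        (fun v => x (k + 1) v - xe k v) (fun v => xe k v - xe (k + 1) v)
      simpa using this
    have h3 : Real.sqrt (∑ v ∈ V (k + 1) ∩ V k, (x (k + 1) v - xe k v) ^ 2) ≤ γ * d k := by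
      rw [Finset.inter_comm]; exact hcontr k
    have h4 : Real.sqrt (∑ v ∈ V (k + 1) ∩ V k, (xe k v - xe (k + 1) v) ^ 2) ≤
        Real.sqrt ((V (k + 1)).card) * B := by
      refine le_trans ?_ (hvar k)
      unfold openDist
      apply Real.sqrt_le_sqrt
      have e : ∀ v, (xe k v - xe (k + 1) v) ^ 2 = (xe (k + 1) v - xe k v) ^ 2 := by
        intro v; ring
      simp_rw [e]
      have hn1 : (0:ℝ) ≤ ∑ v ∈ V (k + 1) \ V k, (xe (k + 1) v) ^ 2 :=
        Finset.sum_nonneg fun _ _ => sq_nonneg _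
      have hn2 : (0:ℝ) ≤ ∑ v ∈ V k \ V (k + 1), (xe k v) ^ 2 :=
        Finset.sum_nonneg fun _ _ => sq_nonneg _
      linarith
    have h5 := hjoin k
    calc d (k + 1) ≤ _ := h1
      _ ≤ (γ * d k + Real.sqrt ((V (k + 1)).card) * B) +
          Real.sqrt ((V (k + 1)).card) * H := by
        have := le_trans h2 (add_le_add h3 h4)
        linarith
      _ = γ * d k + Real.sqrt ((V (k + 1)).card) * (B + H) := by ring
  -- normalized recurrence
  have hsqrtcard : ∀ k, β * Real.sqrt ((V k).card) ≤ Real.sqrt ((V (k + 1)).card) := by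
    intro k
    have h := hcard k
    calc β * Real.sqrt ((V k).card) = Real.sqrt (β ^ 2 * ((V k).card)) := by
          rw [Real.sqrt_mul (by positivity), Real.sqrt_sq hβ0.le]
      _ ≤ Real.sqrt ((V (k + 1)).card) := Real.sqrt_le_sqrt h
  have nrec : ∀ k, d (k + 1) / Real.sqrt ((V (k + 1)).card) ≤
      q * (d k / Real.sqrt ((V k).card)) + (B + H) := by
    intro k
    have hc1 := hcpos (k + 1)
    have hc0 := hcpos k
    rw [div_le_iff₀ hc1]
    have hmul : q * (d k / Real.sqrt ((V k).card)) * Real.sqrt ((V (k + 1)).card) ≥ γ * d k := by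
      have : q * (d k / Real.sqrt ((V k).card)) * Real.sqrt ((V (k + 1)).card) =
          γ * d k * (Real.sqrt ((V (k + 1)).card) / (β * Real.sqrt ((V k).card))) := by
        field_simp [hq]
        rw [hq]; field_simp
      rw [this]
      have h1 : (1:ℝ) ≤ Real.sqrt ((V (k + 1)).card) / (β * Real.sqrt ((V k).card)) :=
        (one_le_div (by positivity)).mpr (hsqrtcard k)
      nlinarith [mul_nonneg hγ0 (hdnn k)]
    calc d (k + 1) ≤ γ * d k + Real.sqrt ((V (k + 1)).card) * (B + H) := key k
      _ ≤ q * (d k / Real.sqrt ((V k).card)) * Real.sqrt ((V (k + 1)).card) +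
          (B + H) * Real.sqrt ((V (k + 1)).card) := by nlinarith
      _ = (q * (d k / Real.sqrt ((V k).card)) + (B + H)) * Real.sqrt ((V (k + 1)).card) := by
          ring
  -- induction
  intro k
  induction k with
  | zero =>
      simp only [pow_zero, one_mul]
      have : (0:ℝ) ≤ (B + H) / (1 - q) := div_nonneg (by linarith) (by linarith)
      linarith
  | succ n ih =>
      have h1 := nrec n
      have h2 : q * (d n / Real.sqrt ((V n).card)) ≤
          q * (q ^ n * (d 0 / Real.sqrt ((V 0).card)) + (B + H) / (1 - q)) :=
        mul_le_mul_of_nonneg_left ih hq0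
      have hne : (1:ℝ) - q ≠ 0 := by linarith
      have hmain : (1 - q) * ((B + H) / (1 - q)) = B + H := mul_div_cancel₀ _ hne
      have h3 : q * ((B + H) / (1 - q)) + (B + H) = (B + H) / (1 - q) := by
        linear_combination -hmain
      calc d (n + 1) / Real.sqrt ((V (n + 1)).card)
          ≤ q * (d n / Real.sqrt ((V n).card)) + (B + H) := h1
        _ ≤ q * (q ^ n * (d 0 / Real.sqrt ((V 0).card)) + (B + H) / (1 - q)) + (B + H) := by
            linarith
        _ = q ^ (n + 1) * (d 0 / Real.sqrt ((V 0).card)) +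
            (q * ((B + H) / (1 - q)) + (B + H)) := by ring
        _ = q ^ (n + 1) * (d 0 / Real.sqrt ((V 0).card)) + (B + H) / (1 - q) := by rw [h3]
end

section
/- (Contractivity of Proportional Dynamic Consensus.) Let G be a simple graph on a nonempty finite vertex type V with graph Laplacian L, let α ∈ (0, 1/2) and ε > 0, and assume the maximum vertex degree Δ of G satisfies Δ ≤ 1/(2ε). Let P = (1−α)I − εL. Then for all x, y : V → ℝ, ‖P x − P y‖ ≤ (1−α) · ‖x − y‖; in particular the map x ↦ P x + α u is a contraction with constant γ = 1 − α for any fixed u : V → ℝ. -/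
open Matrix Finset

/-- Contractivity of Proportional Dynamic Consensus: if the maximum degree satisfies
`Δ ≤ 1/(2ε)`, then `P = (1-α)I - εL` contracts Euclidean distances by the factor
`1 - α`; in particular `x ↦ P x + α u` is a contraction with constant `1 - α`. -/
theorem proportional_dynamic_consensus_contractive {V : Type*} [Fintype V] [DecidableEq V]
    [Nonempty V] (G : SimpleGraph V) [DecidableRel G.Adj]
    (α ε : ℝ) (hα0 : 0 < α) (hα : α < 1 / 2) (hε : 0 < ε)
    (hΔ : (G.maxDegree : ℝ) ≤ 1 / (2 * ε))
    (P : Matrix V V ℝ) (hP : P = (1 - α) • (1 : Matrix V V ℝ) - ε • G.lapMatrix ℝ) :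
    (∀ x y : V → ℝ,
      Real.sqrt ((P *ᵥ x - P *ᵥ y) ⬝ᵥ (P *ᵥ x - P *ᵥ y)) ≤
        (1 - α) * Real.sqrt ((x - y) ⬝ᵥ (x - y))) ∧
    (∀ u x y : V → ℝ,
      Real.sqrt (((P *ᵥ x + α • u) - (P *ᵥ y + α • u)) ⬝ᵥ
          ((P *ᵥ x + α • u) - (P *ᵥ y + α • u))) ≤
        (1 - α) * Real.sqrt ((x - y) ⬝ᵥ (x - y))) := by
  set L : Matrix V V ℝ := G.lapMatrix ℝ with hL
  -- quadratic form of L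
  have hq : ∀ z : V → ℝ, z ⬝ᵥ (L *ᵥ z) =
      (∑ i : V, ∑ j : V, if G.Adj i j then (z i - z j)^2 else 0) / 2 := by
    intro z
    rw [← Matrix.toLinearMap₂'_apply', SimpleGraph.lapMatrix_toLinearMap₂']
  have hqnn : ∀ z : V → ℝ, 0 ≤ z ⬝ᵥ (L *ᵥ z) := by
    intro z
    rw [hq]
    apply div_nonneg _ (by norm_num)
    apply Finset.sum_nonneg; intro i _; apply Finset.sum_nonneg; intro j _
    split <;> positivity
  -- entries of L *ᵥ z
  have hLz : ∀ (z : V → ℝ) (i : V), (L *ᵥ z) i =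
      ∑ j : V, if G.Adj i j then z i - z j else 0 := by
    intro z i
    rw [hL, SimpleGraph.lapMatrix_mulVec_apply, G.degree_eq_sum_if_adj (R := ℝ) i,
      Finset.sum_mul]
    have hN : ∑ u ∈ G.neighborFinset i, z u = ∑ j : V, if G.Adj i j then z j else 0 := by
      rw [SimpleGraph.neighborFinset_eq_filter, Finset.sum_filter]
    rw [hN, ← Finset.sum_sub_distrib]
    refine Finset.sum_congr rfl fun j _ => ?_
    by_cases h : G.Adj i j <;> simp [h]
  -- key spectral-type bound : ‖Lz‖² ≤ 2Δ ⟨z, Lz⟩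
  have key : ∀ z : V → ℝ, (L *ᵥ z) ⬝ᵥ (L *ᵥ z) ≤
      2 * (G.maxDegree : ℝ) * (z ⬝ᵥ (L *ᵥ z)) := by
    intro z
    have step : ∀ i : V, ((L *ᵥ z) i)^2 ≤
        (G.maxDegree : ℝ) * ∑ j : V, if G.Adj i j then (z i - z j)^2 else 0 := by
      intro i
      have cs := Finset.sum_mul_sq_le_sq_mul_sq Finset.univ
        (fun j => if G.Adj i j then (1:ℝ) else 0)
        (fun j => if G.Adj i j then z i - z j else 0)
      have e1 : (∑ j : V, (fun j => if G.Adj i j then (1:ℝ) else 0) j *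
          (fun j => if G.Adj i j then z i - z j else 0) j) = (L *ᵥ z) i := by
        rw [hLz]
        refine Finset.sum_congr rfl fun j _ => ?_
        by_cases h : G.Adj i j <;> simp [h]
      have e2 : (∑ j : V, ((fun j => if G.Adj i j then (1:ℝ) else 0) j)^2) =
          (G.degree i : ℝ) := by
        rw [G.degree_eq_sum_if_adj (R := ℝ) i]
        refine Finset.sum_congr rfl fun j _ => ?_
        by_cases h : G.Adj i j <;> simp [h]
      have e3 : (∑ j : V, ((fun j => if G.Adj i j then z i - z j else 0) j)^2) =
          ∑ j : V, if G.Adj i j then (z i - z j)^2 else 0 := by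
        refine Finset.sum_congr rfl fun j _ => ?_
        by_cases h : G.Adj i j <;> simp [h]
      rw [e1, e2, e3] at cs
      refine cs.trans (mul_le_mul_of_nonneg_right ?_ ?_)
      · exact_mod_cast G.degree_le_maxDegree i
      · apply Finset.sum_nonneg; intro j _; split <;> positivity
    calc (L *ᵥ z) ⬝ᵥ (L *ᵥ z) = ∑ i : V, ((L *ᵥ z) i)^2 := by
          simp [dotProduct, sq]
      _ ≤ ∑ i : V, (G.maxDegree : ℝ) * ∑ j : V, if G.Adj i j then (z i - z j)^2 else 0 :=
          Finset.sum_le_sum fun i _ => step i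
      _ = (G.maxDegree : ℝ) * ∑ i : V, ∑ j : V, if G.Adj i j then (z i - z j)^2 else 0 := by
          rw [Finset.mul_sum]
      _ = 2 * (G.maxDegree : ℝ) * (z ⬝ᵥ (L *ᵥ z)) := by rw [hq]; ring
  -- contraction on quadratic form of P
  have main : ∀ z : V → ℝ, (P *ᵥ z) ⬝ᵥ (P *ᵥ z) ≤ (1 - α)^2 * (z ⬝ᵥ z) := by
    intro z
    have hPz : P *ᵥ z = (1 - α) • z - ε • (L *ᵥ z) := by
      rw [hP, Matrix.sub_mulVec, Matrix.smul_mulVec, Matrix.smul_mulVec,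
        Matrix.one_mulVec]
    have expand : (P *ᵥ z) ⬝ᵥ (P *ᵥ z) = (1 - α)^2 * (z ⬝ᵥ z)
        - 2 * (1 - α) * ε * (z ⬝ᵥ (L *ᵥ z)) + ε^2 * ((L *ᵥ z) ⬝ᵥ (L *ᵥ z)) := by
      rw [hPz]
      simp only [dotProduct, Pi.sub_apply, Pi.smul_apply, smul_eq_mul,
        Finset.mul_sum, ← Finset.sum_add_distrib, ← Finset.sum_sub_distrib]
      apply Finset.sum_congr rfl; intro i _; ring
    rw [expand]
    have h1 : ε^2 * ((L *ᵥ z) ⬝ᵥ (L *ᵥ z)) ≤ ε^2 * (2 * (G.maxDegree : ℝ) * (z ⬝ᵥ (L *ᵥ z))) :=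
      mul_le_mul_of_nonneg_left (key z) (by positivity)
    have h2 : ε * (2 * (G.maxDegree : ℝ)) ≤ 1 := by
      rw [div_eq_inv_mul, mul_one] at hΔ
      calc ε * (2 * (G.maxDegree : ℝ)) ≤ ε * (2 * (2 * ε)⁻¹) := by
            apply mul_le_mul_of_nonneg_left _ hε.le
            exact mul_le_mul_of_nonneg_left hΔ (by norm_num)
        _ = 1 := by field_simp
    have h3 : ε^2 * (2 * (G.maxDegree : ℝ) * (z ⬝ᵥ (L *ᵥ z))) ≤ ε * (z ⬝ᵥ (L *ᵥ z)) := by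
      have : ε^2 * (2 * (G.maxDegree : ℝ) * (z ⬝ᵥ (L *ᵥ z)))
          = (ε * (2 * (G.maxDegree : ℝ))) * (ε * (z ⬝ᵥ (L *ᵥ z))) := by ring
      rw [this]
      nth_rewrite 2 [← one_mul (ε * (z ⬝ᵥ (L *ᵥ z)))]
      exact mul_le_mul_of_nonneg_right h2 (mul_nonneg hε.le (hqnn z))
    have h4 : ε * (z ⬝ᵥ (L *ᵥ z)) ≤ 2 * (1 - α) * ε * (z ⬝ᵥ (L *ᵥ z)) := by
      nth_rewrite 1 [← one_mul (ε * (z ⬝ᵥ (L *ᵥ z)))]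
      have : (1:ℝ) ≤ 2 * (1 - α) := by linarith
      calc 1 * (ε * (z ⬝ᵥ (L *ᵥ z))) ≤ 2 * (1 - α) * (ε * (z ⬝ᵥ (L *ᵥ z))) :=
            mul_le_mul_of_nonneg_right this (mul_nonneg hε.le (hqnn z))
        _ = 2 * (1 - α) * ε * (z ⬝ᵥ (L *ᵥ z)) := by ring
    linarith [h1.trans (h3.trans h4)]
  have mainsqrt : ∀ z : V → ℝ,
      Real.sqrt ((P *ᵥ z) ⬝ᵥ (P *ᵥ z)) ≤ (1 - α) * Real.sqrt (z ⬝ᵥ z) := by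
    intro z
    have h1α : (0:ℝ) ≤ 1 - α := by linarith
    calc Real.sqrt ((P *ᵥ z) ⬝ᵥ (P *ᵥ z)) ≤ Real.sqrt ((1 - α)^2 * (z ⬝ᵥ z)) :=
          Real.sqrt_le_sqrt (main z)
      _ = (1 - α) * Real.sqrt (z ⬝ᵥ z) := by
          rw [Real.sqrt_mul (sq_nonneg _), Real.sqrt_sq h1α]
  constructor
  · intro x y
    rw [← Matrix.mulVec_sub]
    exact mainsqrt (x - y)
  · intro u x y
    have : (P *ᵥ x + α • u) - (P *ᵥ y + α • u) = P *ᵥ (x - y) := by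
      rw [Matrix.mulVec_sub]; abel
    rw [this]
    exact mainsqrt (x - y)
end

section
/- Let G be a simple graph on a nonempty finite vertex type V with graph Laplacian L, let α, ε > 0, and let λ₂ ≥ 0 be such that wᵀ L w ≥ λ₂ · ‖w‖² for every vector w : V → ℝ with Σ_v w_v = 0. Then for every û : V → ℝ with Σ_v û_v = 0, ‖α (αI + εL)⁻¹ û‖ ≤ (α/(α + ε λ₂)) · ‖û‖ = (1/(1 + (ε/α) λ₂)) · ‖û‖. -/
open Matrix Finset

/-- On vectors with zero sum (orthogonal to the all-ones vector), the map
`α (αI + εL)⁻¹` contracts the Euclidean norm by the factor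
`α/(α + ελ₂) = 1/(1 + (ε/α)λ₂)`, where `λ₂` is a lower bound on the Laplacian
quadratic form over zero-sum vectors (the algebraic connectivity). -/
theorem proportional_dynamic_consensus_disagreement_contraction {V : Type*} [Fintype V]
    [DecidableEq V] [Nonempty V] (G : SimpleGraph V) [DecidableRel G.Adj]
    (α ε lam2 : ℝ) (hα : 0 < α) (hε : 0 < ε) (hlam2 : 0 ≤ lam2)
    (hconn : ∀ w : V → ℝ, (∑ v, w v) = 0 →
      w ⬝ᵥ (G.lapMatrix ℝ) *ᵥ w ≥ lam2 * (w ⬝ᵥ w)) :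
    ∀ uhat : V → ℝ, (∑ v, uhat v) = 0 →
      Real.sqrt ((α • ((α • (1 : Matrix V V ℝ) + ε • G.lapMatrix ℝ)⁻¹ *ᵥ uhat)) ⬝ᵥ
          (α • ((α • (1 : Matrix V V ℝ) + ε • G.lapMatrix ℝ)⁻¹ *ᵥ uhat))) ≤
        α / (α + ε * lam2) * Real.sqrt (uhat ⬝ᵥ uhat) ∧
      α / (α + ε * lam2) = 1 / (1 + (ε / α) * lam2) := by
  intro uhat hsum
  set L := G.lapMatrix ℝ with hLdef
  set M := α • (1 : Matrix V V ℝ) + ε • L with hM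
  have hLps : L.PosSemidef := SimpleGraph.posSemidef_lapMatrix ℝ G
  have hLsymm : Lᵀ = L := G.isSymm_lapMatrix (R := ℝ)
  have hpos : 0 < α + ε * lam2 := by positivity
  -- M is positive definite
  have hMpd : M.PosDef := by
    rw [posDef_iff_dotProduct_mulVec]
    constructor
    · rw [IsHermitian, conjTranspose_eq_transpose_of_trivial, hM, transpose_add,
        transpose_smul, transpose_smul, transpose_one, hLsymm]
    · intro x hx
      rw [hM, add_mulVec, smul_mulVec, smul_mulVec, one_mulVec,
        dotProduct_add, dotProduct_smul, dotProduct_smul, star_trivial]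
      have h1 : 0 < x ⬝ᵥ x := by
        have := dotProduct_star_self_pos_iff (v := x) |>.2 hx
        simpa using this
      have h2 : 0 ≤ x ⬝ᵥ L *ᵥ x := by simpa using hLps.dotProduct_mulVec_nonneg x
      have h3 : 0 < α * (x ⬝ᵥ x) := mul_pos hα h1
      have h4 : 0 ≤ ε * (x ⬝ᵥ L *ᵥ x) := mul_nonneg hε.le h2
      simp only [smul_eq_mul]
      linarith
  have hMdet : IsUnit M.det := (isUnit_iff_isUnit_det M).1 hMpd.isUnit
  set x := M⁻¹ *ᵥ uhat with hx
  have hMx : M *ᵥ x = uhat := by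
    rw [hx, mulVec_mulVec, mul_nonsing_inv _ hMdet, one_mulVec]
  -- x has zero sum
  have hLx0 : (fun _ : V => (1:ℝ)) ⬝ᵥ (L *ᵥ x) = 0 := by
    rw [dotProduct_mulVec, ← mulVec_transpose, hLsymm,
      SimpleGraph.lapMatrix_mulVec_const_eq_zero, zero_dotProduct]
  have hxsum : (∑ v, x v) = 0 := by
    have h1 : (∑ v, uhat v) = α * (∑ v, x v) + ε * ((fun _ : V => (1:ℝ)) ⬝ᵥ (L *ᵥ x)) := by
      rw [← hMx, hM, add_mulVec, smul_mulVec, smul_mulVec, one_mulVec]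
      simp [dotProduct, Finset.mul_sum, Finset.sum_add_distrib]
    rw [hLx0, mul_zero, add_zero, hsum] at h1
    exact (mul_eq_zero.1 h1.symm).resolve_left hα.ne'
  -- quadratic lower bound
  have hquad : x ⬝ᵥ uhat ≥ (α + ε * lam2) * (x ⬝ᵥ x) := by
    have hLb : x ⬝ᵥ L *ᵥ x ≥ lam2 * (x ⬝ᵥ x) := hconn x hxsum
    have hexp : x ⬝ᵥ uhat = α * (x ⬝ᵥ x) + ε * (x ⬝ᵥ L *ᵥ x) := by
      rw [← hMx, hM, add_mulVec, smul_mulVec, smul_mulVec, one_mulVec,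
        dotProduct_add, dotProduct_smul, dotProduct_smul, smul_eq_mul, smul_eq_mul]
    nlinarith [hε.le]
  have hxx : (0:ℝ) ≤ x ⬝ᵥ x := Finset.sum_nonneg fun i _ => mul_self_nonneg _
  have huu : (0:ℝ) ≤ uhat ⬝ᵥ uhat := Finset.sum_nonneg fun i _ => mul_self_nonneg _
  set nx := Real.sqrt (x ⬝ᵥ x) with hnx
  set nu := Real.sqrt (uhat ⬝ᵥ uhat) with hnu
  have hnx0 : 0 ≤ nx := Real.sqrt_nonneg _
  have hnu0 : 0 ≤ nu := Real.sqrt_nonneg _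
  have hnx2 : nx ^ 2 = x ⬝ᵥ x := Real.sq_sqrt hxx
  have hnu2 : nu ^ 2 = uhat ⬝ᵥ uhat := Real.sq_sqrt huu
  -- Cauchy–Schwarz
  have hCS : x ⬝ᵥ uhat ≤ nx * nu := by
    have h := Finset.sum_mul_sq_le_sq_mul_sq Finset.univ x uhat
    have h2 : (x ⬝ᵥ uhat) ^ 2 ≤ (nx * nu) ^ 2 := by
      rw [mul_pow, hnx2, hnu2]
      simpa [dotProduct, sq] using h
    nlinarith [mul_nonneg hnx0 hnu0]
  -- key bound
  have key : (α + ε * lam2) * nx ≤ nu := by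
    rcases eq_or_lt_of_le hnx0 with h0 | h0
    · rw [← h0, mul_zero]; exact hnu0
    · have : (α + ε * lam2) * nx * nx ≤ nu * nx := by nlinarith [hnx2]
      exact le_of_mul_le_mul_right (by linarith) h0
  constructor
  · have hnorm : Real.sqrt ((α • x) ⬝ᵥ (α • x)) = α * nx := by
      rw [smul_dotProduct, dotProduct_smul, smul_eq_mul, smul_eq_mul, ← mul_assoc,
        ← sq, Real.sqrt_mul (sq_nonneg α), Real.sqrt_sq hα.le]
    rw [hnorm, div_mul_eq_mul_div, le_div_iff₀ hpos]
    nlinarith [hα.le]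
  · rw [div_eq_div_iff hpos.ne' (by positivity : (0:ℝ) < 1 + ε / α * lam2).ne']
    field_simp
end

section
/- Let G be a simple graph on a nonempty finite vertex type V with n = |V| vertices and graph Laplacian L, let α, ε > 0, and let λ₂ ≥ 0 be such that wᵀ L w ≥ λ₂ · ‖w‖² for every w : V → ℝ with Σ_v w_v = 0. Let u : V → ℝ, let ū = ((Σ_v u_v)/n)·𝟙 be the constant vector of the average of u, and assume ‖u − ū‖_∞ ≤ Π. Let xᵉ = (αI + εL)⁻¹ (α u) be the point of interest. Then ‖xᵉ − ū‖ ≤ (1/(1 + (ε/α) λ₂)) · sqrt(n) · Π. -/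
open Matrix Finset

/-- Distance between the point of interest `xᵉ = (αI + εL)⁻¹(αu)` of Proportional
Dynamic Consensus and the constant vector `ū` of the average input: if the input
disagreement is bounded by `Π` in the sup norm, then
`‖xᵉ - ū‖ ≤ (1/(1 + (ε/α)λ₂)) √n Π`. -/
theorem proportional_dynamic_consensus_poi_error {V : Type*} [Fintype V]
    [DecidableEq V] [Nonempty V] (G : SimpleGraph V) [DecidableRel G.Adj]
    (α ε lam2 Pi' : ℝ) (hα : 0 < α) (hε : 0 < ε) (hlam2 : 0 ≤ lam2)
    (hconn : ∀ w : V → ℝ, (∑ v, w v) = 0 →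
      w ⬝ᵥ (G.lapMatrix ℝ) *ᵥ w ≥ lam2 * (w ⬝ᵥ w))
    (u ubar xe : V → ℝ)
    (hubar : ubar = fun _ => (∑ v, u v) / (Fintype.card V : ℝ))
    (hPi : ∀ v, |u v - ubar v| ≤ Pi')
    (hxe : xe = (α • (1 : Matrix V V ℝ) + ε • G.lapMatrix ℝ)⁻¹ *ᵥ (α • u)) :
    Real.sqrt (∑ v, (xe v - ubar v) ^ 2) ≤
      1 / (1 + (ε / α) * lam2) * Real.sqrt (Fintype.card V : ℝ) * Pi' := by
  classical
  have hncard : (0 : ℝ) < (Fintype.card V : ℝ) := by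
    exact_mod_cast Fintype.card_pos
  have hPi0 : 0 ≤ Pi' := le_trans (abs_nonneg _) (hPi (Classical.arbitrary V))
  set L := G.lapMatrix ℝ with hLdef
  set M := α • (1 : Matrix V V ℝ) + ε • L with hMdef
  have hLsd : L.PosSemidef := SimpleGraph.posSemidef_lapMatrix ℝ G
  have hLsmul : (ε • L).PosSemidef := by
    refine ⟨?_, fun x => ?_⟩
    · rw [IsHermitian, conjTranspose_smul, hLsd.1]
      simp
    · exact (hLsd.smul hε.le).2 x
  have hMpd : M.PosDef := by
    have h1 : (α • (1 : Matrix V V ℝ)).PosDef := by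
      rw [smul_one_eq_diagonal]
      exact Matrix.posDef_diagonal_iff.mpr fun _ => hα
    exact h1.add_posSemidef hLsmul
  have hdet : IsUnit M.det := hMpd.det_pos.ne'.isUnit
  have hMxe : M *ᵥ xe = α • u := by
    rw [hxe, mulVec_mulVec, Matrix.mul_nonsing_inv _ hdet, one_mulVec]
  have hLubar : L *ᵥ ubar = 0 := by
    have h1 : ubar = ((∑ v, u v) / (Fintype.card V : ℝ)) • (fun _ => (1 : ℝ)) := by
      rw [hubar]; funext v; simp
    rw [h1, mulVec_smul, SimpleGraph.lapMatrix_mulVec_const_eq_zero, smul_zero]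
  have hMubar : M *ᵥ ubar = α • ubar := by
    rw [hMdef, add_mulVec, smul_mulVec, one_mulVec, smul_mulVec,
      hLubar, smul_zero, add_zero]
  set w : V → ℝ := xe - ubar with hwdef
  have hMw : M *ᵥ w = α • (u - ubar) := by
    rw [hwdef, mulVec_sub, hMxe, hMubar, ← smul_sub]
  have hsumdiff : ∑ v, (u v - ubar v) = 0 := by
    rw [hubar]
    rw [Finset.sum_sub_distrib, Finset.sum_const, card_univ, nsmul_eq_mul]
    field_simp
    ring
  have hLones : L *ᵥ (fun _ => (1 : ℝ)) = 0 :=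
    SimpleGraph.lapMatrix_mulVec_const_eq_zero G
  have hsumw : ∑ v, w v = 0 := by
    have h1 : (fun _ => (1 : ℝ)) ⬝ᵥ (M *ᵥ w) = α * ∑ v, w v := by
      rw [hMdef, add_mulVec, dotProduct_add, smul_mulVec, one_mulVec,
        dotProduct_smul, smul_mulVec, dotProduct_smul]
      have h2 : (fun _ => (1 : ℝ)) ⬝ᵥ (L *ᵥ w) = 0 := by
        rw [dotProduct_mulVec, ← mulVec_transpose]
        have : Lᵀ = L := G.isSymm_lapMatrix ℝ
        rw [this, hLones, zero_dotProduct]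
      rw [h2, smul_zero, add_zero, smul_eq_mul]
      simp [dotProduct]
    have h3 : (fun _ => (1 : ℝ)) ⬝ᵥ (M *ᵥ w) = 0 := by
      rw [hMw, dotProduct_smul, smul_eq_mul]
      have : (fun _ => (1 : ℝ)) ⬝ᵥ (u - ubar) = 0 := by
        simpa [dotProduct] using hsumdiff
      rw [this, mul_zero]
    have := h1.symm.trans h3
    exact (mul_eq_zero.mp this).resolve_left hα.ne'
  have hdsq : ∑ v, (u v - ubar v) ^ 2 ≤ (Fintype.card V : ℝ) * Pi' ^ 2 := by
    calc ∑ v, (u v - ubar v) ^ 2 ≤ ∑ _v : V, Pi' ^ 2 := by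
          refine Finset.sum_le_sum fun v _ => ?_
          have := abs_le.mp (hPi v)
          nlinarith [this.1, this.2]
      _ = (Fintype.card V : ℝ) * Pi' ^ 2 := by
          rw [Finset.sum_const, card_univ, nsmul_eq_mul]
  set S : ℝ := ∑ v, w v ^ 2 with hSdef
  have hS0 : 0 ≤ S := Finset.sum_nonneg fun v _ => sq_nonneg _
  have hww : w ⬝ᵥ w = S := by
    simp [dotProduct, hSdef, sq]
  set B : ℝ := Real.sqrt (Fintype.card V : ℝ) * Pi' with hBdef
  have hB0 : 0 ≤ B := mul_nonneg (Real.sqrt_nonneg _) hPi0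
  have hCS : w ⬝ᵥ (u - ubar) ≤ Real.sqrt S * B := by
    have h1 : (∑ v, w v * (u v - ubar v)) ^ 2 ≤
        S * (∑ v, (u v - ubar v) ^ 2) :=
      Finset.sum_mul_sq_le_sq_mul_sq Finset.univ w (fun v => u v - ubar v)
    have h2 : (∑ v, w v * (u v - ubar v)) ^ 2 ≤ S * ((Fintype.card V : ℝ) * Pi' ^ 2) :=
      h1.trans (mul_le_mul_of_nonneg_left hdsq hS0)
    have h3 : w ⬝ᵥ (u - ubar) = ∑ v, w v * (u v - ubar v) := by
      simp [dotProduct]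
    rw [h3]
    calc ∑ v, w v * (u v - ubar v) ≤ |∑ v, w v * (u v - ubar v)| := le_abs_self _
      _ = Real.sqrt ((∑ v, w v * (u v - ubar v)) ^ 2) := (Real.sqrt_sq_eq_abs _).symm
      _ ≤ Real.sqrt (S * ((Fintype.card V : ℝ) * Pi' ^ 2)) := Real.sqrt_le_sqrt h2
      _ = Real.sqrt S * B := by
          rw [Real.sqrt_mul hS0, Real.sqrt_mul hncard.le, Real.sqrt_sq hPi0, hBdef]
  -- the quadratic form identity and bound
  have hq2 : w ⬝ᵥ (M *ᵥ w) = α * (w ⬝ᵥ (u - ubar)) := by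
    rw [hMw, dotProduct_smul, smul_eq_mul]
  have hq1 : w ⬝ᵥ (M *ᵥ w) = α * S + ε * (w ⬝ᵥ (L *ᵥ w)) := by
    rw [hMdef, add_mulVec, dotProduct_add, smul_mulVec, one_mulVec,
      dotProduct_smul, smul_mulVec, dotProduct_smul, smul_eq_mul, smul_eq_mul, hww]
  have hL2 : w ⬝ᵥ (L *ᵥ w) ≥ lam2 * S := by
    have := hconn w hsumw
    rwa [hww] at this
  have hkey : (α + ε * lam2) * S ≤ α * (Real.sqrt S * B) := by
    have h1 : α * S + ε * (lam2 * S) ≤ α * S + ε * (w ⬝ᵥ (L *ᵥ w)) := by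
      have := mul_le_mul_of_nonneg_left hL2 hε.le
      linarith
    have h2 : α * S + ε * (w ⬝ᵥ (L *ᵥ w)) ≤ α * (Real.sqrt S * B) := by
      rw [← hq1, hq2]
      exact mul_le_mul_of_nonneg_left hCS hα.le
    nlinarith
  -- conclude
  have hgoal_eq : Real.sqrt (∑ v, (xe v - ubar v) ^ 2) = Real.sqrt S := by
    rw [hSdef]
    congr 1
  rw [hgoal_eq]
  have hden : 0 < α + ε * lam2 := by positivity
  have hfrac : 1 / (1 + ε / α * lam2) = α / (α + ε * lam2) := by
    rw [eq_div_iff hden.ne']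
    field_simp
  rw [hfrac]
  have hsq : Real.sqrt S * Real.sqrt S = S := Real.mul_self_sqrt hS0
  rcases eq_or_lt_of_le (Real.sqrt_nonneg S) with hs | hs
  · rw [← hs]
    positivity
  · rw [div_mul_eq_mul_div, div_mul_eq_mul_div, le_div_iff₀ hden]
    have : (α + ε * lam2) * (Real.sqrt S * Real.sqrt S) ≤ α * (Real.sqrt S * B) := by
      rw [hsq]; exact hkey
    have h4 : (α + ε * lam2) * Real.sqrt S ≤ α * B := by
      rcases le_or_gt ((α + ε * lam2) * Real.sqrt S) (α * B) with h | h
      · exact h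
      · exfalso
        nlinarith
    calc Real.sqrt S * (α + ε * lam2) = (α + ε * lam2) * Real.sqrt S := by ring
      _ ≤ α * B := h4
      _ = α * Real.sqrt (Fintype.card V : ℝ) * Pi' := by rw [hBdef]; ring
end

section
/- (Bounded join process of Open Proportional Dynamic Consensus.) Let G be a simple graph on a nonempty finite vertex type V with n = |V| vertices and graph Laplacian L, let α, ε > 0, and let λ₂ ≥ 0 be such that wᵀ L w ≥ λ₂ · ‖w‖² for every w : V → ℝ with Σ_v w_v = 0. Let u : V → ℝ with ‖u − ū‖_∞ ≤ Π, where ū is the constant vector of the average of u, and let xᵉ = (αI + εL)⁻¹ (α u). Then for every subset A of V (the set of arriving agents, who join with state equal to their input), sqrt( Σ_{v ∈ A} (u_v − xᵉ_v)² ) ≤ sqrt(n) · (1 + 1/(1 + (ε/α) λ₂)) · Π. -/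
open Matrix Finset

set_option maxHeartbeats 1000000

private lemma opdc_aux_tri (Sp Sw P W s : ℝ) (hPsq : P ^ 2 = Sp) (hWsq : W ^ 2 = Sw)
    (hs : s ≤ P * W) : Sw + 2 * s + Sp ≤ (W + P) ^ 2 := by nlinarith

/-- Bounded join process of Open Proportional Dynamic Consensus: arriving agents
join with state equal to their input, so for any set `A` of arriving agents,
`sqrt(Σ_{v∈A} (u_v - xᵉ_v)²) ≤ √n (1 + 1/(1 + (ε/α)λ₂)) Π`. -/
theorem open_proportional_dynamic_consensus_bounded_join {V : Type*} [Fintype V]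
    [DecidableEq V] [Nonempty V] (G : SimpleGraph V) [DecidableRel G.Adj]
    (α ε lam2 Pi' : ℝ) (hα : 0 < α) (hε : 0 < ε) (hlam2 : 0 ≤ lam2)
    (hconn : ∀ w : V → ℝ, (∑ v, w v) = 0 →
      w ⬝ᵥ (G.lapMatrix ℝ) *ᵥ w ≥ lam2 * (w ⬝ᵥ w))
    (u ubar xe : V → ℝ)
    (hubar : ubar = fun _ => (∑ v, u v) / (Fintype.card V : ℝ))
    (hPi : ∀ v, |u v - ubar v| ≤ Pi')
    (hxe : xe = (α • (1 : Matrix V V ℝ) + ε • G.lapMatrix ℝ)⁻¹ *ᵥ (α • u)) :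
    ∀ A : Finset V,
      Real.sqrt (∑ v ∈ A, (u v - xe v) ^ 2) ≤
        Real.sqrt (Fintype.card V : ℝ) * (1 + 1 / (1 + (ε / α) * lam2)) * Pi' := by
  intro A
  set L : Matrix V V ℝ := G.lapMatrix ℝ with hLdef
  set M : Matrix V V ℝ := α • (1 : Matrix V V ℝ) + ε • L with hMdef
  have hL_psd : L.PosSemidef := G.posSemidef_lapMatrix ℝ
  -- M is positive definite
  have hMpd : M.PosDef := by
    refine posDef_iff_dotProduct_mulVec.mpr ⟨?_, fun x hx => ?_⟩
    · have hLH := hL_psd.isHermitian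
      simp only [Matrix.IsHermitian, hMdef, conjTranspose_add, conjTranspose_smul,
        conjTranspose_one, star_trivial] at *
      rw [hLH]
    · have h1 : star x ⬝ᵥ M *ᵥ x = α * (star x ⬝ᵥ x) + ε * (star x ⬝ᵥ L *ᵥ x) := by
        simp [hMdef, add_mulVec, smul_mulVec, dotProduct_add, one_mulVec,
          dotProduct_smul, smul_eq_mul]
      rw [h1]
      have h2 : 0 < star x ⬝ᵥ x := dotProduct_star_self_pos_iff.mpr hx
      have h3 : 0 ≤ star x ⬝ᵥ L *ᵥ x := (posSemidef_iff_dotProduct_mulVec.mp hL_psd).2 x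
      nlinarith
  have hdet : IsUnit M.det := hMpd.det_pos.ne'.isUnit
  have hMxe : M *ᵥ xe = α • u := by
    rw [hxe, mulVec_mulVec, Matrix.mul_nonsing_inv _ hdet, one_mulVec]
  -- L kills constants
  have hLconst : ∀ c : ℝ, L *ᵥ (fun _ => c) = 0 := by
    intro c
    have : (fun _ => c : V → ℝ) = c • (fun _ => (1:ℝ)) := by funext v; simp
    rw [this, mulVec_smul, G.lapMatrix_mulVec_const_eq_zero, smul_zero]
  have hMubar : M *ᵥ ubar = α • ubar := by
    rw [hubar, hMdef, add_mulVec, smul_mulVec, smul_mulVec, one_mulVec,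
      hLconst, smul_zero, add_zero]
  set w : V → ℝ := fun v => u v - ubar v with hwdef
  set p : V → ℝ := fun v => ubar v - xe v with hpdef
  have hcard : (0:ℝ) < (Fintype.card V : ℝ) := by
    exact_mod_cast Fintype.card_pos
  have hsumw : (∑ v, w v) = 0 := by
    simp only [hwdef, Finset.sum_sub_distrib, hubar]
    rw [Finset.sum_const, card_univ, nsmul_eq_mul, mul_div_cancel₀ _ hcard.ne']
    ring
  -- M p = -α • w
  have hMp : M *ᵥ p = (-α) • w := by
    have : p = ubar - xe := by funext v; simp [hpdef]
    rw [this, mulVec_sub, hMubar, hMxe]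
    funext v
    simp [hwdef]
    ring
  -- column sums of L vanish
  have hLcol : ∀ j, (∑ v, L v j) = 0 := by
    intro j
    have hs := G.isSymm_lapMatrix (R := ℝ)
    have h1 := congrFun (G.lapMatrix_mulVec_const_eq_zero (R := ℝ)) j
    simp only [mulVec, dotProduct, mul_one, Pi.zero_apply] at h1
    calc (∑ v, L v j) = ∑ v, L j v := by
          refine Finset.sum_congr rfl fun v _ => ?_
          exact hs.apply j v
      _ = 0 := h1
  have hsumLp : ∀ y : V → ℝ, (∑ v, (L *ᵥ y) v) = 0 := by
    intro y
    simp only [mulVec, dotProduct]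
    rw [Finset.sum_comm]
    refine Finset.sum_eq_zero fun j _ => ?_
    rw [← Finset.sum_mul, hLcol, zero_mul]
  -- p has zero sum
  have hsump : (∑ v, p v) = 0 := by
    have h1 : (∑ v, (M *ᵥ p) v) = α * (∑ v, p v) := by
      simp only [hMdef, add_mulVec, smul_mulVec, one_mulVec, Pi.add_apply,
        Pi.smul_apply, smul_eq_mul]
      rw [Finset.sum_add_distrib, ← Finset.mul_sum, ← Finset.mul_sum, hsumLp, mul_zero, add_zero]
    have h2 : (∑ v, (M *ᵥ p) v) = 0 := by
      rw [hMp]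
      simp only [Pi.smul_apply, smul_eq_mul, ← Finset.mul_sum, hsumw, mul_zero]
    rw [h2] at h1
    have := h1.symm
    rcases mul_eq_zero.mp this with h | h
    · exact absurd h hα.ne'
    · exact h
  -- quadratic form lower bound
  have hquad : p ⬝ᵥ M *ᵥ p ≥ (α + ε * lam2) * (p ⬝ᵥ p) := by
    have h1 : p ⬝ᵥ M *ᵥ p = α * (p ⬝ᵥ p) + ε * (p ⬝ᵥ L *ᵥ p) := by
      simp [hMdef, add_mulVec, smul_mulVec, dotProduct_add, one_mulVec,
        dotProduct_smul, smul_eq_mul]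
    have h2 := hconn p hsump
    rw [h1]
    nlinarith
  set Sp : ℝ := ∑ v, p v ^ 2 with hSp
  set Sw : ℝ := ∑ v, w v ^ 2 with hSw
  have hpp : p ⬝ᵥ p = Sp := by simp [dotProduct, hSp, sq]
  have hSp0 : 0 ≤ Sp := Finset.sum_nonneg fun v _ => sq_nonneg _
  have hSw0 : 0 ≤ Sw := Finset.sum_nonneg fun v _ => sq_nonneg _
  set P : ℝ := Real.sqrt Sp with hP
  set W : ℝ := Real.sqrt Sw with hW
  have hP0 : 0 ≤ P := Real.sqrt_nonneg _
  have hW0 : 0 ≤ W := Real.sqrt_nonneg _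
  have hPsq : P ^ 2 = Sp := Real.sq_sqrt hSp0
  have hWsq : W ^ 2 = Sw := Real.sq_sqrt hSw0
  -- Cauchy-Schwarz
  have hCS : (∑ v, p v * w v) ^ 2 ≤ Sp * Sw :=
    Finset.sum_mul_sq_le_sq_mul_sq _ _ _
  have hpwPW : |∑ v, p v * w v| ≤ P * W := by
    have h := Real.sqrt_le_sqrt hCS
    rwa [Real.sqrt_sq_eq_abs, Real.sqrt_mul hSp0] at h
  -- key bound: (α + ε lam2) P² ≤ α P W
  have hkey : (α + ε * lam2) * Sp ≤ α * (P * W) := by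
    have h1 : p ⬝ᵥ M *ᵥ p = -α * (∑ v, p v * w v) := by
      rw [hMp]
      simp only [dotProduct, Pi.smul_apply, smul_eq_mul, Finset.mul_sum]
      exact Finset.sum_congr rfl fun v _ => by ring
    have h2 : -α * (∑ v, p v * w v) ≤ α * (P * W) := by
      have : -(∑ v, p v * w v) ≤ P * W := (neg_le_abs _).trans hpwPW
      nlinarith
    calc (α + ε * lam2) * Sp = (α + ε * lam2) * (p ⬝ᵥ p) := by rw [hpp]
      _ ≤ p ⬝ᵥ M *ᵥ p := hquad
      _ = -α * (∑ v, p v * w v) := h1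
      _ ≤ α * (P * W) := h2
  have hPle : P ≤ α / (α + ε * lam2) * W := by
    have hd : 0 < α + ε * lam2 := by positivity
    rcases eq_or_lt_of_le hP0 with h0 | h0
    · rw [← h0]; positivity
    · rw [← hPsq] at hkey
      rw [div_mul_eq_mul_div, le_div_iff₀ hd]
      nlinarith
  clear_value Sp Sw P W
  clear hconn hMpd hdet hMxe hLconst hMubar hMp hLcol hsumLp hquad hkey hCS hxe
  clear_value M L
  clear hMdef hLdef hL_psd
  -- triangle inequality pieces
  have hPi0 : 0 ≤ Pi' := le_trans (abs_nonneg _) (hPi (Classical.arbitrary V))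
  have hWle : W ≤ Real.sqrt (Fintype.card V : ℝ) * Pi' := by
    have h1 : Sw ≤ (Fintype.card V : ℝ) * Pi' ^ 2 := by
      rw [hSw]
      calc (∑ v, w v ^ 2) ≤ ∑ _v : V, Pi' ^ 2 := by
            refine Finset.sum_le_sum fun v _ => ?_
            simp only [hwdef]
            nlinarith [hPi v, abs_nonneg (u v - ubar v), sq_abs (u v - ubar v)]
        _ = (Fintype.card V : ℝ) * Pi' ^ 2 := by
            rw [Finset.sum_const, card_univ, nsmul_eq_mul]
    rw [hW]
    calc Real.sqrt Sw ≤ Real.sqrt ((Fintype.card V : ℝ) * Pi' ^ 2) := Real.sqrt_le_sqrt h1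
      _ = Real.sqrt (Fintype.card V : ℝ) * Pi' := by
          rw [Real.sqrt_mul hcard.le, Real.sqrt_sq hPi0]
  -- main chain
  have hzA : (∑ v ∈ A, (u v - xe v) ^ 2) ≤ ∑ v, (u v - xe v) ^ 2 :=
    Finset.sum_le_sum_of_subset_of_nonneg (Finset.subset_univ A)
      (fun v _ _ => sq_nonneg _)
  have hzfull : (∑ v, (u v - xe v) ^ 2) ≤ (W + P) ^ 2 := by
    have hz : ∀ v, u v - xe v = w v + p v := by
      intro v; simp only [hwdef, hpdef]; ring
    have : (∑ v, (u v - xe v) ^ 2) = Sw + 2 * (∑ v, p v * w v) + Sp := by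
      simp only [hz, hSw, hSp]
      rw [Finset.mul_sum, ← Finset.sum_add_distrib, ← Finset.sum_add_distrib]
      exact Finset.sum_congr rfl fun v _ => by ring
    rw [this]
    exact opdc_aux_tri Sp Sw P W _ hPsq hWsq
      ((le_abs_self (∑ v, p v * w v)).trans hpwPW)
  have h1 : Real.sqrt (∑ v ∈ A, (u v - xe v) ^ 2) ≤ W + P := by
    calc Real.sqrt (∑ v ∈ A, (u v - xe v) ^ 2) ≤ Real.sqrt ((W + P) ^ 2) :=
          Real.sqrt_le_sqrt (hzA.trans hzfull)
      _ = W + P := Real.sqrt_sq (by positivity)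
  have hfrac : α / (α + ε * lam2) = 1 / (1 + (ε / α) * lam2) := by
    rw [div_eq_div_iff (by positivity) (by positivity)]
    field_simp
  calc Real.sqrt (∑ v ∈ A, (u v - xe v) ^ 2) ≤ W + P := h1
    _ ≤ W + α / (α + ε * lam2) * W := by linarith
    _ = (1 + 1 / (1 + (ε / α) * lam2)) * W := by rw [hfrac]; ring
    _ ≤ (1 + 1 / (1 + (ε / α) * lam2)) * (Real.sqrt (Fintype.card V : ℝ) * Pi') := by
        have : (0:ℝ) ≤ 1 + 1 / (1 + (ε / α) * lam2) := by positivity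
        exact mul_le_mul_of_nonneg_left hWle this
    _ = Real.sqrt (Fintype.card V : ℝ) * (1 + 1 / (1 + (ε / α) * lam2)) * Pi' := by ring
end
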